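/- Let K be a subfield of the real numbers ℝ and let y be a natural number with y ≥ 2. Then: (i) there exists x ∈ K with 1 < x and x^y ≤ 2; (ii) for all x ∈ K with 1 < x one has x < x^y, and for all x, x₁ ∈ K with 1 < x and 1 < x₁, if x^y < x₁^y then x < x₁; (iii) for all c₁, c₂ ∈ K with 1 < c₁, 1 < c₂ and c₁ ≠ c₂, there exists x₀ ∈ K with 1 < x₀ such that x₀^y lies strictly between c₁ and c₂, i.e. (c₁ < x₀^y ∧ x₀^y < c₂) ∨ (c₂ < x₀^y ∧ x₀^y < c₁). -/

import Mathlib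

private lemma key_rat_pow_btwn (y : ℕ) (hy : 2 ≤ y) (a b : ℝ) (ha : 1 ≤ a) (hab : a < b) :
    ∃ q : ℚ, 1 < (q : ℝ) ∧ a < (q : ℝ) ^ y ∧ (q : ℝ) ^ y < b := by
  have hy0 : y ≠ 0 := by omega
  have hyR : (0:ℝ) < (y:ℝ) := by exact_mod_cast Nat.pos_of_ne_zero hy0
  have ha0 : (0:ℝ) ≤ a := by linarith
  have h1 : a ^ (1/(y:ℝ)) < b ^ (1/(y:ℝ)) :=
    Real.rpow_lt_rpow ha0 hab (by positivity)
  obtain ⟨q, hq1, hq2⟩ := exists_rat_btwn h1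
  have hone : (1:ℝ) ≤ a ^ (1/(y:ℝ)) := Real.one_le_rpow ha (by positivity)
  have hkey : ∀ c : ℝ, 0 ≤ c → (c ^ (1/(y:ℝ))) ^ y = c := by
    intro c hc
    rw [← Real.rpow_natCast (c ^ (1/(y:ℝ))) y, ← Real.rpow_mul hc, one_div,
      inv_mul_cancel₀ (ne_of_gt hyR), Real.rpow_one]
  refine ⟨q, lt_of_le_of_lt hone hq1, ?_, ?_⟩
  · calc a = (a ^ (1/(y:ℝ))) ^ y := (hkey a ha0).symm
    _ < (q:ℝ) ^ y := pow_lt_pow_left₀ hq1 (by positivity) hy0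
  · calc (q:ℝ) ^ y < (b ^ (1/(y:ℝ))) ^ y :=
        pow_lt_pow_left₀ hq2 (by linarith) hy0
    _ = b := hkey b (by linarith)

theorem subfield_satisfies_root_hypotheses (K : Subfield ℝ) (y : ℕ) (hy : 2 ≤ y) :
    (∃ x ∈ K, 1 < x ∧ x ^ y ≤ 2) ∧
      (∀ x ∈ K, 1 < x → x < x ^ y) ∧
      (∀ x ∈ K, ∀ x₁ ∈ K, 1 < x → 1 < x₁ → x ^ y < x₁ ^ y → x < x₁) ∧
      (∀ c₁ ∈ K, ∀ c₂ ∈ K, 1 < c₁ → 1 < c₂ → c₁ ≠ c₂ →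
        ∃ x₀ ∈ K, 1 < x₀ ∧
          ((c₁ < x₀ ^ y ∧ x₀ ^ y < c₂) ∨ (c₂ < x₀ ^ y ∧ x₀ ^ y < c₁))) := by
  refine ⟨?_, ?_, ?_, ?_⟩
  · obtain ⟨q, hq1, _, hq3⟩ := key_rat_pow_btwn y hy 1 2 le_rfl one_lt_two
    exact ⟨q, SubfieldClass.ratCast_mem K q, hq1, le_of_lt hq3⟩
  · intro x _ hx
    exact lt_self_pow₀ hx (by omega)
  · intro x _ x₁ _ hx hx₁ h
    by_contra hc
    push_neg at hc
    exact absurd (pow_le_pow_left₀ (by linarith) hc y) (not_le.mpr h)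
  · intro c₁ _ c₂ _ hc₁ hc₂ hne
    rcases hne.lt_or_gt with h | h
    · obtain ⟨q, hq1, hq2, hq3⟩ := key_rat_pow_btwn y hy c₁ c₂ (le_of_lt hc₁) h
      exact ⟨q, SubfieldClass.ratCast_mem K q, hq1, Or.inl ⟨hq2, hq3⟩⟩
    · obtain ⟨q, hq1, hq2, hq3⟩ := key_rat_pow_btwn y hy c₂ c₁ (le_of_lt hc₂) h
      exact ⟨q, SubfieldClass.ratCast_mem K q, hq1, Or.inr ⟨hq2, hq3⟩⟩
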